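/- Let F^λ[G] be a twisted group algebra over a field F of characteristic p > 0 such that the commutator ideal [F^λ[G], F^λ[G]]·F^λ[G] is nil. If the basis element g̃ (for g ∈ G) is a p-element of the unit group, i.e. g̃^{p^t} = 1 for some t, then g itself has order p^t equal to the order of g̃, and the twist μ(g) = ∏_{i=1}^{k-1} λ(gⁱ, g) equals 1, where k is the order of g. -/

import Mathlib

/-- Additive subgroup generated by products `s * t` with `s ∈ S`, `t ∈ T`. -/
def aprod {R : Type*} [NonUnitalRing R] (S T : AddSubgroup R) : AddSubgroup R :=
  AddSubgroup.closure {x : R | ∃ s ∈ S, ∃ t ∈ T, x = s * t}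

/-- Additive subgroup generated by Lie commutators `s*t - t*s`. -/
def lbrk {R : Type*} [NonUnitalRing R] (S T : AddSubgroup R) : AddSubgroup R :=
  AddSubgroup.closure {x : R | ∃ s ∈ S, ∃ t ∈ T, x = s * t - t * s}

/-- The lower Lie central series `γ₁(R) = R`, `γₙ(R) = [γₙ₋₁(R), R]`. -/
def lieGamma (R : Type*) [NonUnitalRing R] : ℕ → AddSubgroup R
  | 0 => ⊤
  | 1 => ⊤
  | n + 2 => lbrk (lieGamma R (n + 1)) ⊤

/-- The `n`-th lower Lie power `R^[n] = γₙ(R)·R`. -/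
def lowerLiePow (R : Type*) [NonUnitalRing R] (n : ℕ) : AddSubgroup R :=
  aprod (lieGamma R n) ⊤

/-- The twist `μ(g) = ∏_{i=1}^{k-1} λ(gⁱ,g)` where `k` is the order of `g`. -/
noncomputable def twist {G : Type*} [Group G] {F : Type*} [Field F] (l : G → G → Fˣ) (g : G) : F :=
  ∏ i ∈ Finset.Icc 1 (orderOf g - 1), (l (g ^ i) g : F)

/-- In a twisted group algebra of characteristic `p > 0` with nil commutator
ideal `[A,A]·A`, if the basis element `g̃` has order `pᵗ` then `g` has the same
order `pᵗ` and its twist `μ(g)` equals `1`. -/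
theorem stmt_8 {F : Type*} [Field F] {G : Type*} [Group G]
    {A : Type*} [Ring A] [Algebra F A]
    (l : G → G → Fˣ) (B : Module.Basis G F A)
    (hone : B 1 = 1)
    (hmul : ∀ g h : G, B g * B h = ((l g h : F)) • B (g * h))
    (hcoc : ∀ a b c : G, l a (b * c) * l b c = l (a * b) c * l a b)
    (hnorm : ∀ g : G, l g 1 = 1 ∧ l 1 g = 1)
    (p : ℕ) [Fact p.Prime] [CharP F p]
    (hnil : ∀ x ∈ lowerLiePow A 2, IsNilpotent x)
    (g : G) (t : ℕ) (hg : orderOf (B g) = p ^ t) :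
    orderOf g = p ^ t ∧ twist l g = 1 := by
  have hA : Nontrivial A := ⟨⟨B g, 0, B.ne_zero g⟩⟩
  have key : ∀ n : ℕ, (B g) ^ (n + 1)
      = (∏ i ∈ Finset.Icc 1 n, (l (g ^ i) g : F)) • B (g ^ (n + 1)) := by
    intro n
    induction n with
    | zero => simp
    | succ n ih =>
      rw [pow_succ, ih, smul_mul_assoc, hmul,
        Finset.prod_Icc_succ_top (by omega : 1 ≤ n + 1), smul_smul]
      rw [← pow_succ]
  have hp : 0 < p := (Fact.out (p := p.Prime)).pos
  have hN : 0 < p ^ t := pow_pos hp t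
  have h1 : (B g) ^ (p ^ t) = B 1 := by
    rw [hone, ← hg]; exact pow_orderOf_eq_one (B g)
  have hkey := key (p ^ t - 1)
  rw [Nat.sub_add_cancel hN] at hkey
  rw [hkey] at h1
  have h2 := congrArg (fun a => B.repr a 1) h1
  simp only [map_smul, Module.Basis.repr_self, Finsupp.smul_apply, Finsupp.single_apply,
    smul_eq_mul] at h2
  have hgN : g ^ (p ^ t) = 1 := by
    by_contra hne
    rw [Finsupp.single_eq_of_ne (Ne.symm hne), mul_zero, Finsupp.single_eq_same] at h2
    exact zero_ne_one h2
  have hdvd : orderOf g ∣ p ^ t := orderOf_dvd_of_pow_eq_one hgN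
  obtain ⟨s, hst, hks⟩ := (Nat.dvd_prime_pow Fact.out).mp hdvd
  have hk1 : 1 ≤ orderOf g := by rw [hks]; exact pow_pos hp s
  have hBk : (B g) ^ orderOf g = (twist l g) • (1 : A) := by
    have h := key (orderOf g - 1)
    rw [Nat.sub_add_cancel hk1] at h
    rw [h, pow_orderOf_eq_one, hone, twist]
  have hmu : (twist l g) ^ (p ^ (t - s)) = 1 := by
    have hpow : ((B g) ^ orderOf g) ^ (p ^ (t - s)) = 1 := by
      rw [← pow_mul, hks, ← pow_add, Nat.add_sub_cancel' hst, ← hg,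
        pow_orderOf_eq_one]
    rw [hBk, smul_pow, one_pow, Algebra.smul_def, mul_one] at hpow
    exact (algebraMap F A).injective (by rw [hpow, map_one])
  have hmu1 : twist l g = 1 := by
    have h0 : (twist l g - 1) ^ (p ^ (t - s)) = 0 := by
      rw [sub_pow_char_pow, hmu, one_pow, sub_self]
    have hne : p ^ (t - s) ≠ 0 := (pow_pos hp _).ne'
    exact sub_eq_zero.mp (pow_eq_zero_iff hne |>.mp h0)
  refine ⟨?_, hmu1⟩
  have hBk1 : (B g) ^ orderOf g = 1 := by rw [hBk, hmu1, one_smul]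
  have hdvd2 : p ^ t ∣ orderOf g := by
    rw [← hg]; exact orderOf_dvd_of_pow_eq_one hBk1
  exact Nat.dvd_antisymm hdvd hdvd2
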